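/- arXiv:1701.00097 — 4 statements merged into one kernel-verified Lean document; each statement's English description precedes it below -/
import Mathlib

section
/- (Lemma 2.1) Let $\omega$ be a 3-cocycle of $G$ with values in $S^1$ and let $a \in G$. Define $\varphi_a : G_a \times G_a \to S^1$ by $\varphi_a(g,h) = \overline{\omega}(a,g,h)\,\omega(g,a,h)\,\overline{\omega}(g,h,a)$, where $G_a$ is the centralizer of $a$ in $G$. Then $\varphi_a$ is a 2-cocycle of $G_a$, i.e., $\varphi_a(h_2,h_3)\,\varphi_a(h_1,h_2h_3) = \varphi_a(h_1h_2,h_3)\,\varphi_a(h_1,h_2)$ for all $h_1,h_2,h_3 \in G_a$. -/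
/-- `φₐ(g,h) = ω̄(a,g,h) ω(g,a,h) ω̄(g,h,a)`. -/
noncomputable def phiA {G : Type*} [Group G] (ω : G → G → G → Circle) (a g h : G) : Circle :=
  (ω a g h)⁻¹ * ω g a h * (ω g h a)⁻¹

/-- Lemma 2.1: for a 3-cocycle `ω` and `a ∈ G`, the function `φₐ` is a 2-cocycle
on the centralizer of `a`. -/
theorem stmt_2 {G : Type*} [Group G] (ω : G → G → G → Circle)
    (hω : ∀ g1 g2 g3 g4 : G,
      ω g1 g2 g3 * ω g1 (g2 * g3) g4 * ω g2 g3 g4 =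
        ω (g1 * g2) g3 g4 * ω g1 g2 (g3 * g4))
    (a : G) (h1 h2 h3 : G)
    (c1 : h1 * a = a * h1) (c2 : h2 * a = a * h2) (c3 : h3 * a = a * h3) :
    phiA ω a h2 h3 * phiA ω a h1 (h2 * h3) =
      phiA ω a (h1 * h2) h3 * phiA ω a h1 h2 := by
  have A := hω a h1 h2 h3
  have B := hω h1 a h2 h3
  have C := hω h1 h2 a h3
  have D := hω h1 h2 h3 a
  rw [← c1] at A
  rw [← c2] at B
  rw [← c3] at C
  have A' := congrArg (fun z : Circle => (z : ℂ)) A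
  have B' := congrArg (fun z : Circle => (z : ℂ)) B
  have C' := congrArg (fun z : Circle => (z : ℂ)) C
  have D' := congrArg (fun z : Circle => (z : ℂ)) D
  push_cast at A' B' C' D'
  have comb : ((ω a h1 h2 : ℂ) * ω a (h1*h2) h3 * ω h1 h2 h3) *
      ((ω h1 h2 a : ℂ) * ω h1 (h2*a) h3 * ω h2 a h3) *
      ((ω (h1*a) h2 h3 : ℂ) * ω h1 a (h2*h3)) *
      ((ω (h1*h2) h3 a : ℂ) * ω h1 h2 (h3*a)) =
      ((ω (h1*a) h2 h3 : ℂ) * ω a h1 (h2*h3)) *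
      ((ω (h1*h2) a h3 : ℂ) * ω h1 h2 (h3*a)) *
      ((ω h1 a h2 : ℂ) * ω h1 (h2*a) h3 * ω a h2 h3) *
      ((ω h1 h2 h3 : ℂ) * ω h1 (h2*h3) a * ω h2 h3 a) := by
    rw [A', C', ← B', ← D']
  have E : (ω a h1 h2 : ℂ) * ω a (h1*h2) h3 * ω h1 h2 a * ω h2 a h3 *
      ω h1 a (h2*h3) * ω (h1*h2) h3 a =
      (ω a h1 (h2*h3) : ℂ) * ω (h1*h2) a h3 * ω h1 a h2 * ω a h2 h3 *
      ω h1 (h2*h3) a * ω h2 h3 a := by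
    have hne : ((ω (h1*a) h2 h3 : ℂ) * ω h1 (h2*a) h3 * ω h1 h2 h3 * ω h1 h2 (h3*a)) ≠ 0 := by
      simp [Circle.coe_ne_zero]
    apply mul_left_cancel₀ hne
    linear_combination comb
  apply Circle.coe_injective
  simp only [phiA]
  push_cast
  field_simp
  linear_combination E
end

section
/- (Proposition 2.2, special case $x=y=z$) Let $\omega$ be a 3-cocycle of $G$, $a \in G$, and $\varphi_a(g,h) = \overline{\omega}(a,g,h)\,\omega(g,a,h)\,\overline{\omega}(g,h,a)$ the associated 2-cocycle on the centralizer $G_a$. For any $x \in G$, the 2-cocycle $(g,h) \mapsto \varphi_{xax^{-1}}(xgx^{-1}, xhx^{-1})$ on $G_a$ is coboundarily equivalent to $\varphi_a$, i.e., there exists $\gamma : G_a \to S^1$ such that $\varphi_{xax^{-1}}(xgx^{-1},xhx^{-1}) = \gamma(g)\,\gamma(h)\,\overline{\gamma}(gh)\,\varphi_a(g,h)$ for all $g,h \in G_a$. -/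
section Aux

variable {G : Type*} [Group G] {M : Type*} [AddCommGroup M]

/-- Additive transgression: `θ_b(p,q) = ω(b,p,q) - ω(p, p⁻¹bp, q) + ω(p,q,(pq)⁻¹b(pq))`. -/
def thetaAdd (ω : G → G → G → M) (b p q : G) : M :=
  ω b p q - ω p (p⁻¹ * b * p) q + ω p q ((p * q)⁻¹ * b * (p * q))

theorem thetaAdd_star (ω : G → G → G → M)
    (hω : ∀ g1 g2 g3 g4 : G,
      ω g1 g2 g3 + ω g1 (g2 * g3) g4 + ω g2 g3 g4 =
        ω (g1 * g2) g3 g4 + ω g1 g2 (g3 * g4))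
    (b p q r : G) :
    thetaAdd ω b p q + thetaAdd ω b (p * q) r =
      thetaAdd ω b p (q * r) + thetaAdd ω (p⁻¹ * b * p) q r := by
  have A := hω b p q r
  have B := hω p (p⁻¹ * b * p) q r
  have C := hω p q ((p * q)⁻¹ * b * (p * q)) r
  have D := hω p q r ((p * q * r)⁻¹ * b * (p * q * r))
  simp only [thetaAdd, mul_assoc, mul_inv_rev, inv_inv, inv_mul_cancel_left,
    mul_inv_cancel_left, one_mul, mul_one] at A B C D ⊢
  linear_combination (norm := abel) A - B + C - D

theorem main_add (ω : G → G → G → M)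
    (hω : ∀ g1 g2 g3 g4 : G,
      ω g1 g2 g3 + ω g1 (g2 * g3) g4 + ω g2 g3 g4 =
        ω (g1 * g2) g3 g4 + ω g1 g2 (g3 * g4))
    (a x g h : G) (hg : g * a = a * g) (hh : h * a = a * h) :
    thetaAdd ω (x * a * x⁻¹) (x * g * x⁻¹) (x * h * x⁻¹)
      = (thetaAdd ω (x * a * x⁻¹) (x * g * x⁻¹) x - thetaAdd ω (x * a * x⁻¹) x g)
      + (thetaAdd ω (x * a * x⁻¹) (x * h * x⁻¹) x - thetaAdd ω (x * a * x⁻¹) x h)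
      - (thetaAdd ω (x * a * x⁻¹) (x * (g * h) * x⁻¹) x - thetaAdd ω (x * a * x⁻¹) x (g * h))
      + thetaAdd ω a g h := by
  have hg' : g⁻¹ * a * g = a := by
    rw [mul_assoc, ← hg, ← mul_assoc, inv_mul_cancel, one_mul]
  have S1 := thetaAdd_star ω hω (x * a * x⁻¹) x g h
  have S2 := thetaAdd_star ω hω (x * a * x⁻¹) (x * g * x⁻¹) x h
  have S3 := thetaAdd_star ω hω (x * a * x⁻¹) (x * g * x⁻¹) (x * h * x⁻¹) x
  rw [show x⁻¹ * (x * a * x⁻¹) * x = a by group] at S1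
  have hb : (x * g * x⁻¹)⁻¹ * (x * a * x⁻¹) * (x * g * x⁻¹) = x * a * x⁻¹ := by
    rw [show (x * g * x⁻¹)⁻¹ * (x * a * x⁻¹) * (x * g * x⁻¹) = x * (g⁻¹ * a * g) * x⁻¹ by group, hg']
  rw [show (x * g * x⁻¹) * x = x * g by group, hb] at S2
  rw [show (x * g * x⁻¹) * (x * h * x⁻¹) = x * (g * h) * x⁻¹ by group,
      show (x * h * x⁻¹) * x = x * h by group, hb] at S3
  linear_combination (norm := abel) S3 - S2 + S1

end Aux

/-- Proposition 2.2 (special case `x = y = z`): the 2-cocycle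
`(g,h) ↦ φ_{xax⁻¹}(xgx⁻¹, xhx⁻¹)` on the centralizer of `a` is coboundarily
equivalent to `φₐ`. -/
theorem stmt_3 {G : Type*} [Group G] (ω : G → G → G → Circle)
    (hω : ∀ g1 g2 g3 g4 : G,
      ω g1 g2 g3 * ω g1 (g2 * g3) g4 * ω g2 g3 g4 =
        ω (g1 * g2) g3 g4 * ω g1 g2 (g3 * g4))
    (a x : G) :
    ∃ γ : G → Circle, ∀ g h : G, g * a = a * g → h * a = a * h →
      phiA ω (x * a * x⁻¹) (x * g * x⁻¹) (x * h * x⁻¹) =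
        γ g * γ h * (γ (g * h))⁻¹ * phiA ω a g h := by
  set ω' : G → G → G → Additive Circle := fun p q r => Additive.ofMul (ω p q r) with hω'
  have hωadd : ∀ g1 g2 g3 g4 : G,
      ω' g1 g2 g3 + ω' g1 (g2 * g3) g4 + ω' g2 g3 g4 =
        ω' (g1 * g2) g3 g4 + ω' g1 g2 (g3 * g4) := by
    intro g1 g2 g3 g4
    simpa [hω', ← ofMul_mul] using congrArg Additive.ofMul (hω g1 g2 g3 g4)
  refine ⟨fun g => Additive.toMul
      (thetaAdd ω' (x * a * x⁻¹) x g - thetaAdd ω' (x * a * x⁻¹) (x * g * x⁻¹) x), ?_⟩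
  intro g h hg hh
  have hg' : g⁻¹ * a * g = a := by
    rw [mul_assoc, ← hg, ← mul_assoc, inv_mul_cancel, one_mul]
  have hh' : h⁻¹ * a * h = a := by
    rw [mul_assoc, ← hh, ← mul_assoc, inv_mul_cancel, one_mul]
  have hgh' : (g * h)⁻¹ * a * (g * h) = a := by
    rw [show (g * h)⁻¹ * a * (g * h) = h⁻¹ * (g⁻¹ * a * g) * h by group, hg', hh']
  have M := main_add ω' hωadd a x g h hg hh
  apply Additive.ofMul.injective
  have e2 : Additive.ofMul (phiA ω a g h) = - thetaAdd ω' a g h := by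
    simp only [thetaAdd, phiA, hω', ofMul_mul, ofMul_inv, hg', hgh']
    abel
  have hbg : (x * g * x⁻¹)⁻¹ * (x * a * x⁻¹) * (x * g * x⁻¹) = x * a * x⁻¹ := by
    rw [show (x * g * x⁻¹)⁻¹ * (x * a * x⁻¹) * (x * g * x⁻¹) = x * (g⁻¹ * a * g) * x⁻¹ by group, hg']
  have hbgh : ((x * g * x⁻¹) * (x * h * x⁻¹))⁻¹ * (x * a * x⁻¹) * ((x * g * x⁻¹) * (x * h * x⁻¹))
      = x * a * x⁻¹ := by
    rw [show ((x * g * x⁻¹) * (x * h * x⁻¹))⁻¹ * (x * a * x⁻¹) * ((x * g * x⁻¹) * (x * h * x⁻¹))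
        = x * ((g * h)⁻¹ * a * (g * h)) * x⁻¹ by group, hgh']
  have e1 : Additive.ofMul (phiA ω (x * a * x⁻¹) (x * g * x⁻¹) (x * h * x⁻¹))
      = - thetaAdd ω' (x * a * x⁻¹) (x * g * x⁻¹) (x * h * x⁻¹) := by
    simp only [thetaAdd, phiA, hω', ofMul_mul, ofMul_inv, hbg, hbgh]
    abel
  simp only [ofMul_mul, ofMul_inv, e1, e2, ofMul_toMul]
  linear_combination (norm := abel) -M
end

section
/- (Lemma 4.1) Let $G$ be a group generated by subgroups $H$ and $K$, and let $\omega$ be a normalized 3-cocycle of $G$ with values in $S^1$ satisfying $\omega|_{H\times H\times H} \equiv 1$ and $\omega|_{K\times K\times K} \equiv 1$. Then $\omega$ is coboundarily equivalent, via a normalized 2-cochain $\varphi$ with $\partial\varphi$ trivial on $H^3$ and on $K^3$, to a normalized 3-cocycle $\omega'$ that still satisfies $\omega'|_{H^3} \equiv 1 \equiv \omega'|_{K^3}$ and additionally $\omega'(g, l, l^{-1}) = 1 = \omega'(l^{-1}, l, g)$ for all $g \in G$ and $l \in H \cup K$. -/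
open Classical
set_option linter.unusedSectionVars false
set_option maxHeartbeats 1000000

/-- The coboundary of a 2-cochain `φ`. -/
noncomputable def coboundary2 {G : Type*} [Group G] (φ : G → G → Circle) (g1 g2 g3 : G) :
    Circle :=
  φ g2 g3 * (φ (g1 * g2) g3)⁻¹ * φ g1 (g2 * g3) * (φ g1 g2)⁻¹

namespace Stmt8Aux

/-! ### Circle helpers -/

lemma circle_eq_add {x y : Circle} (h : Additive.ofMul x = Additive.ofMul y) : x = y := h

noncomputable def csqrt (z : Circle) : Circle := Circle.exp (Complex.arg z / 2)

lemma csqrt_sq (z : Circle) : csqrt z * csqrt z = z := by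
  rw [csqrt, ← Circle.exp_add, add_halves, Circle.exp_arg]

lemma csqrt_one : csqrt (1 : Circle) = 1 := by
  rw [csqrt]
  norm_num [Circle.coe_one, Complex.arg_one, Circle.exp_zero]

variable {G : Type*} [Group G]

/-! ### coboundary2 generalities -/

lemma coboundary2_cocycle (φ : G → G → Circle) (g1 g2 g3 g4 : G) :
    coboundary2 φ g1 g2 g3 * coboundary2 φ g1 (g2 * g3) g4 * coboundary2 φ g2 g3 g4 =
      coboundary2 φ (g1 * g2) g3 g4 * coboundary2 φ g1 g2 (g3 * g4) := by
  apply circle_eq_add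
  simp only [coboundary2, mul_assoc, ofMul_mul, ofMul_inv]
  abel

lemma coboundary2_mul (φ ψ : G → G → Circle) (g1 g2 g3 : G) :
    coboundary2 (fun a b => φ a b * ψ a b) g1 g2 g3 =
      coboundary2 φ g1 g2 g3 * coboundary2 ψ g1 g2 g3 := by
  apply circle_eq_add
  simp only [coboundary2, mul_assoc, ofMul_mul, ofMul_inv, mul_inv_rev]
  abel

lemma coboundary2_norm (φ : G → G → Circle) (hφ : ∀ g : G, φ g 1 = 1 ∧ φ 1 g = 1)
    (g1 g2 g3 : G) (h : g1 = 1 ∨ g2 = 1 ∨ g3 = 1) : coboundary2 φ g1 g2 g3 = 1 := by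
  rcases h with h | h | h <;> subst h <;>
    simp [coboundary2, (hφ _).1, (hφ _).2]

lemma coboundary2_triv (φ : G → G → Circle) (P : G → Prop)
    (hmul : ∀ a b, P a → P b → P (a * b))
    (hφ : ∀ a b, P a → P b → φ a b = 1)
    (g1 g2 g3 : G) (h1 : P g1) (h2 : P g2) (h3 : P g3) :
    coboundary2 φ g1 g2 g3 = 1 := by
  simp [coboundary2, hφ _ _ h1 h2, hφ _ _ h2 h3, hφ _ _ (hmul _ _ h1 h2) h3,
    hφ _ _ h1 (hmul _ _ h2 h3)]

/-! ### The six maps on pairs (an S₃-action) -/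

def sP (x : G × G) : G × G := (x.1 * x.2, x.2⁻¹)
def tP (x : G × G) : G × G := (x.1⁻¹, x.1 * x.2)
def rP (x : G × G) : G × G := (x.2⁻¹, x.1⁻¹)
def oP (x : G × G) : G × G := ((x.1 * x.2)⁻¹, x.1)
def o2P (x : G × G) : G × G := (x.2, (x.1 * x.2)⁻¹)

section Comp
variable (x : G × G)

@[simp] lemma sP_sP : sP (sP x) = x := by simp [sP]
@[simp] lemma sP_tP : sP (tP x) = o2P x := by simp [sP, tP, o2P]
@[simp] lemma sP_rP : sP (rP x) = oP x := by simp [sP, rP, oP, mul_inv_rev]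
@[simp] lemma sP_oP : sP (oP x) = rP x := by simp [sP, oP, rP, mul_inv_rev]
@[simp] lemma sP_o2P : sP (o2P x) = tP x := by simp [sP, o2P, tP, mul_inv_rev]
@[simp] lemma tP_sP : tP (sP x) = oP x := by simp [tP, sP, oP]
@[simp] lemma tP_tP : tP (tP x) = x := by simp [tP]
@[simp] lemma tP_rP : tP (rP x) = o2P x := by simp [tP, rP, o2P, mul_inv_rev]
@[simp] lemma tP_oP : tP (oP x) = sP x := by simp [tP, oP, sP, mul_inv_rev]
@[simp] lemma tP_o2P : tP (o2P x) = rP x := by simp [tP, o2P, rP, mul_inv_rev]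
@[simp] lemma rP_sP : rP (sP x) = o2P x := by simp [rP, sP, o2P, mul_inv_rev]
@[simp] lemma rP_tP : rP (tP x) = oP x := by simp [rP, tP, oP, mul_inv_rev]
@[simp] lemma rP_rP : rP (rP x) = x := by simp [rP]
@[simp] lemma rP_oP : rP (oP x) = tP x := by simp [rP, oP, tP, mul_inv_rev]
@[simp] lemma rP_o2P : rP (o2P x) = sP x := by simp [rP, o2P, sP, mul_inv_rev]
@[simp] lemma oP_sP : oP (sP x) = tP x := by simp [oP, sP, tP, mul_inv_rev]
@[simp] lemma oP_tP : oP (tP x) = rP x := by simp [oP, tP, rP, mul_inv_rev]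
@[simp] lemma oP_rP : oP (rP x) = sP x := by simp [oP, rP, sP, mul_inv_rev]
@[simp] lemma oP_oP : oP (oP x) = o2P x := by simp [oP, o2P, mul_inv_rev]
@[simp] lemma oP_o2P : oP (o2P x) = x := by simp [oP, o2P, mul_inv_rev]
@[simp] lemma o2P_sP : o2P (sP x) = rP x := by simp [o2P, sP, rP, mul_inv_rev]
@[simp] lemma o2P_tP : o2P (tP x) = sP x := by simp [o2P, tP, sP, mul_inv_rev]
@[simp] lemma o2P_rP : o2P (rP x) = tP x := by simp [o2P, rP, tP, mul_inv_rev]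
@[simp] lemma o2P_oP : o2P (oP x) = x := by simp [o2P, oP, mul_inv_rev]
@[simp] lemma o2P_o2P : o2P (o2P x) = oP x := by simp [o2P, oP, mul_inv_rev]

end Comp

/-- `y` is in the (six-element) orbit of `x`. -/
def inE (x y : G × G) : Prop :=
  y = x ∨ y = sP x ∨ y = tP x ∨ y = rP x ∨ y = oP x ∨ y = o2P x

lemma inE_refl (x : G × G) : inE x x := Or.inl rfl

lemma inE_symm {x y : G × G} (h : inE x y) : inE y x := by
  rcases h with rfl | rfl | rfl | rfl | rfl | rfl <;> unfold inE <;> simp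

lemma inE_trans {x y z : G × G} (h1 : inE x y) (h2 : inE y z) : inE x z := by
  rcases h1 with rfl | rfl | rfl | rfl | rfl | rfl <;>
    rcases h2 with rfl | rfl | rfl | rfl | rfl | rfl <;>
    unfold inE <;> simp

def pairSetoid : Setoid (G × G) :=
  ⟨inE, ⟨inE_refl, inE_symm, inE_trans⟩⟩

noncomputable def rep (x : G × G) : G × G :=
  (Quotient.mk (pairSetoid) x).out

lemma rep_inE (x : G × G) : inE (rep x) x :=
  Quotient.mk_out (s := pairSetoid) x

lemma rep_eq_of_inE {x y : G × G} (h : inE x y) : rep x = rep y :=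
  congrArg Quotient.out (Quotient.sound (s := pairSetoid) h)

lemma rep_sP (x : G × G) : rep (sP x) = rep x :=
  (rep_eq_of_inE (Or.inr (Or.inl rfl))).symm

lemma rep_tP (x : G × G) : rep (tP x) = rep x :=
  (rep_eq_of_inE (Or.inr (Or.inr (Or.inl rfl)))).symm

def Ndeg (x : G × G) : Prop := x.1 = 1 ∨ x.2 = 1 ∨ x.1 * x.2 = 1
def Tsub (H K : Subgroup G) (x : G × G) : Prop :=
  (x.1 ∈ H ∧ x.2 ∈ H) ∨ (x.1 ∈ K ∧ x.2 ∈ K)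
def Ddeg (x : G × G) : Prop := x.1 = x.2 ∧ x.1 * (x.1 * x.1) = 1

section Inv
variable (H K : Subgroup G) (x : G × G)

lemma N_sP : Ndeg (sP x) ↔ Ndeg x := by
  unfold Ndeg sP; dsimp only
  rw [inv_eq_one, mul_inv_cancel_right]
  tauto

lemma N_tP : Ndeg (tP x) ↔ Ndeg x := by
  unfold Ndeg tP; dsimp only
  rw [inv_eq_one, inv_mul_cancel_left]
  tauto

lemma N_rP : Ndeg (rP x) ↔ Ndeg x := by
  unfold Ndeg rP; dsimp only
  rw [inv_eq_one, inv_eq_one, ← mul_inv_rev, inv_eq_one]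
  tauto

lemma N_oP : Ndeg (oP x) ↔ Ndeg x := by
  unfold Ndeg oP; dsimp only
  rw [inv_eq_one, inv_mul_eq_one, mul_eq_left]
  tauto

lemma N_o2P : Ndeg (o2P x) ↔ Ndeg x := by
  unfold Ndeg o2P; dsimp only
  rw [inv_eq_one, mul_inv_eq_one, right_eq_mul]
  tauto

lemma T_sP : Tsub H K (sP x) ↔ Tsub H K x := by
  unfold Tsub sP; dsimp only
  constructor
  · rintro (⟨h1, h2⟩ | ⟨h1, h2⟩)
    · exact Or.inl ⟨by simpa using mul_mem h1 h2, inv_mem_iff.mp h2⟩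
    · exact Or.inr ⟨by simpa using mul_mem h1 h2, inv_mem_iff.mp h2⟩
  · rintro (⟨h1, h2⟩ | ⟨h1, h2⟩)
    · exact Or.inl ⟨mul_mem h1 h2, inv_mem h2⟩
    · exact Or.inr ⟨mul_mem h1 h2, inv_mem h2⟩

lemma T_tP : Tsub H K (tP x) ↔ Tsub H K x := by
  unfold Tsub tP; dsimp only
  constructor
  · rintro (⟨h1, h2⟩ | ⟨h1, h2⟩)
    · exact Or.inl ⟨inv_mem_iff.mp h1, by simpa using mul_mem h1 h2⟩
    · exact Or.inr ⟨inv_mem_iff.mp h1, by simpa using mul_mem h1 h2⟩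
  · rintro (⟨h1, h2⟩ | ⟨h1, h2⟩)
    · exact Or.inl ⟨inv_mem h1, mul_mem h1 h2⟩
    · exact Or.inr ⟨inv_mem h1, mul_mem h1 h2⟩

lemma T_rP : Tsub H K (rP x) ↔ Tsub H K x := by
  unfold Tsub rP; dsimp only
  simp [inv_mem_iff, and_comm]

lemma T_oP : Tsub H K (oP x) ↔ Tsub H K x := by
  unfold Tsub oP; dsimp only
  constructor
  · rintro (⟨h1, h2⟩ | ⟨h1, h2⟩)
    · exact Or.inl ⟨h2, by simpa using mul_mem (inv_mem h2) (inv_mem_iff.mp h1)⟩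
    · exact Or.inr ⟨h2, by simpa using mul_mem (inv_mem h2) (inv_mem_iff.mp h1)⟩
  · rintro (⟨h1, h2⟩ | ⟨h1, h2⟩)
    · exact Or.inl ⟨inv_mem (mul_mem h1 h2), h1⟩
    · exact Or.inr ⟨inv_mem (mul_mem h1 h2), h1⟩

lemma T_o2P : Tsub H K (o2P x) ↔ Tsub H K x := by
  unfold Tsub o2P; dsimp only
  constructor
  · rintro (⟨h1, h2⟩ | ⟨h1, h2⟩)
    · exact Or.inl ⟨by simpa using mul_mem (inv_mem_iff.mp h2) (inv_mem h1), h1⟩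
    · exact Or.inr ⟨by simpa using mul_mem (inv_mem_iff.mp h2) (inv_mem h1), h1⟩
  · rintro (⟨h1, h2⟩ | ⟨h1, h2⟩)
    · exact Or.inl ⟨h2, inv_mem (mul_mem h1 h2)⟩
    · exact Or.inr ⟨h2, inv_mem (mul_mem h1 h2)⟩

end Inv

lemma cube_inv (a : G) : a⁻¹ * (a⁻¹ * a⁻¹) = 1 ↔ a * (a * a) = 1 := by
  have h : a⁻¹ * (a⁻¹ * a⁻¹) = (a * (a * a))⁻¹ := by group
  rw [h, inv_eq_one]

lemma sq_eq_inv {a : G} (h : a * (a * a) = 1) : a * a = a⁻¹ :=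
  eq_inv_of_mul_eq_one_left (by rw [mul_assoc]; exact h)

lemma inv_sq_eq {a : G} (h : a * (a * a) = 1) : a⁻¹ * a⁻¹ = a := by
  rw [← mul_inv_rev, sq_eq_inv h, inv_inv]

lemma D_sP (x : G × G) : Ddeg (sP x) ↔ Ddeg x := by
  obtain ⟨a, b⟩ := x
  unfold Ddeg sP; dsimp only
  constructor
  · rintro ⟨h1, h2⟩
    rw [h1, cube_inv] at h2
    have ha : a = b := by rw [eq_mul_inv_of_mul_eq h1, inv_sq_eq h2]
    exact ⟨ha, by rw [ha]; exact h2⟩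
  · rintro ⟨h1, h2⟩
    subst h1
    exact ⟨by rw [sq_eq_inv h2], by rw [sq_eq_inv h2, cube_inv]; exact h2⟩

lemma D_tP (x : G × G) : Ddeg (tP x) ↔ Ddeg x := by
  obtain ⟨a, b⟩ := x
  unfold Ddeg tP; dsimp only
  constructor
  · rintro ⟨h1, h2⟩
    rw [cube_inv] at h2
    have hb : b = a := by
      have h3 : b = a⁻¹ * a⁻¹ := eq_inv_mul_of_mul_eq h1.symm
      rw [h3, inv_sq_eq h2]
    exact ⟨hb.symm, h2⟩
  · rintro ⟨h1, h2⟩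
    subst h1
    exact ⟨by rw [sq_eq_inv h2], by rw [cube_inv]; exact h2⟩

lemma D_rP (x : G × G) : Ddeg (rP x) ↔ Ddeg x := by
  obtain ⟨a, b⟩ := x
  unfold Ddeg rP; dsimp only
  rw [inv_inj, cube_inv, eq_comm]
  constructor
  · rintro ⟨h1, h2⟩; exact ⟨h1, h1 ▸ h2⟩
  · rintro ⟨h1, h2⟩; exact ⟨h1, h1 ▸ h2⟩

lemma D_oP (x : G × G) : Ddeg (oP x) ↔ Ddeg x := by
  obtain ⟨a, b⟩ := x
  unfold Ddeg oP; dsimp only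
  rw [cube_inv]
  constructor
  · rintro ⟨h1, hc⟩
    have ha3 : a * (a * a) = 1 := by rw [← h1, cube_inv]; exact hc
    have hinv : a⁻¹ = a * b := by
      conv_lhs => rw [← h1]
      exact inv_inv _
    have hb' : b = a⁻¹ * a⁻¹ := eq_inv_mul_of_mul_eq (b := a) (c := a⁻¹) hinv.symm
    have hb : a = b := (hb'.trans (inv_sq_eq ha3)).symm
    exact ⟨hb, ha3⟩
  · rintro ⟨h1, h2⟩
    subst h1
    have h3 : a * a = a⁻¹ := sq_eq_inv h2
    exact ⟨by rw [h3, inv_inv], by rw [h3, cube_inv]; exact h2⟩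

lemma D_o2P (x : G × G) : Ddeg (o2P x) ↔ Ddeg x := by
  obtain ⟨a, b⟩ := x
  unfold Ddeg o2P; dsimp only
  constructor
  · rintro ⟨h1, h2⟩
    have h4 : a * b = b⁻¹ := inv_eq_iff_eq_inv.mp h1.symm
    have ha : a = b := by
      have h5 : a = b⁻¹ * b⁻¹ := eq_mul_inv_of_mul_eq h4
      rw [h5, inv_sq_eq h2]
    exact ⟨ha, by rw [ha]; exact h2⟩
  · rintro ⟨h1, h2⟩
    subst h1
    have h3 : a * a = a⁻¹ := sq_eq_inv h2
    exact ⟨by rw [h3, inv_inv], h2⟩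

section W
variable (S : G → Prop) (c1 : G → G → Circle) (a b : G)

noncomputable def w0 : Circle := if ¬ S a ∧ S b then c1 a b else 1
noncomputable def w1 : Circle := if S a ∧ S b then c1 a b else 1
noncomputable def w2 : Circle :=
  if S a ∧ ¬ S (a * b) then c1 (a * b)⁻¹ a
  else if S a ∧ S b ∧ S (a * b) then (c1 a b)⁻¹ else 1
noncomputable def w3 : Circle :=
  if S a ∧ S (a * b) ∧ ¬ S b then c1 (a * b)⁻¹ a
  else if S a ∧ S b ∧ S (a * b) then c1 a b * c1 (a * b)⁻¹ a else 1
noncomputable def w4 : Circle :=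
  if S (a * b) ∧ ¬ S b then c1 b (a * b)⁻¹
  else if S a ∧ S b ∧ S (a * b) then (c1 a b * c1 (a * b)⁻¹ a)⁻¹ else 1
noncomputable def w5 : Circle := if S (a * b) ∧ S b ∧ ¬ S a then c1 b (a * b)⁻¹ else 1

lemma e01 (hb : S b) : w0 S c1 a b * w1 S c1 a b = c1 a b := by
  by_cases ha : S a <;> simp [w0, w1, ha, hb]

lemma e12 (hc : S (a * b)) : w1 S c1 a b * w2 S c1 a b = 1 := by
  by_cases ha : S a <;> by_cases hb : S b <;> simp [w1, w2, ha, hb, hc]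

lemma e23 (ha : S a) : w2 S c1 a b * w3 S c1 a b = c1 (a * b)⁻¹ a := by
  by_cases hb : S b <;> by_cases hc : S (a * b) <;> simp [w2, w3, ha, hb, hc]

lemma e34 (hb : S b) : w3 S c1 a b * w4 S c1 a b = 1 := by
  by_cases ha : S a <;> by_cases hc : S (a * b) <;> simp [w3, w4, ha, hb, hc] <;> group

lemma e45 (hF : S a → S b → S (a * b) → c1 a b * c1 (a * b)⁻¹ a * c1 b (a * b)⁻¹ = 1)
    (hc : S (a * b)) : w4 S c1 a b * w5 S c1 a b = c1 b (a * b)⁻¹ := by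
  by_cases ha : S a <;> by_cases hb : S b <;> simp [w4, w5, ha, hb, hc]
  · have h := hF ha hb hc
    simp only [mul_inv_rev] at h
    rw [← mul_inv_rev]
    exact inv_eq_of_mul_eq_one_right h

lemma e50 (ha : S a) : w5 S c1 a b * w0 S c1 a b = 1 := by
  simp [w5, w0, ha]


noncomputable def val (r x : G × G) : Circle :=
  if x = r then w0 S c1 r.1 r.2
  else if x = sP r then w1 S c1 r.1 r.2
  else if x = oP r then w2 S c1 r.1 r.2
  else if x = rP r then w3 S c1 r.1 r.2
  else if x = o2P r then w4 S c1 r.1 r.2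
  else if x = tP r then w5 S c1 r.1 r.2
  else 1

lemma val_evals (r : G × G) (hN : ¬ Ndeg r) (hD : ¬ Ddeg r) :
    val S c1 r r = w0 S c1 r.1 r.2 ∧
    val S c1 r (sP r) = w1 S c1 r.1 r.2 ∧
    val S c1 r (oP r) = w2 S c1 r.1 r.2 ∧
    val S c1 r (rP r) = w3 S c1 r.1 r.2 ∧
    val S c1 r (o2P r) = w4 S c1 r.1 r.2 ∧
    val S c1 r (tP r) = w5 S c1 r.1 r.2 := by
  obtain ⟨a, b⟩ := r
  simp only [Ndeg] at hN
  push_neg at hN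
  obtain ⟨ha, hb, hab⟩ := hN
  have hs : sP (a, b) = (a * b, b⁻¹) := rfl
  have ht : tP (a, b) = (a⁻¹, a * b) := rfl
  have hr : rP (a, b) = (b⁻¹, a⁻¹) := rfl
  have ho : oP (a, b) = ((a * b)⁻¹, a) := rfl
  have ho2 : o2P (a, b) = (b, (a * b)⁻¹) := rfl
  have cube : ∀ u : G, (u * u)⁻¹ = u → u * (u * u) = 1 := by
    intro u h
    have h2 : u * u = u⁻¹ := inv_eq_iff_eq_inv.mp h
    simp [h2]
  have hDD : ¬ (a = b ∧ a * (a * a) = 1) := hD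
  have d1 : sP (a, b) ≠ (a, b) := by
    rw [hs]; intro hh; injection hh with h1 h2; exact hb (mul_eq_left.mp h1)
  have d2 : oP (a, b) ≠ (a, b) := by
    rw [ho]; intro hh; injection hh with h1 h2
    refine hDD ⟨h2, ?_⟩
    rw [← h2] at h1
    exact cube a h1
  have d3 : rP (a, b) ≠ (a, b) := by
    rw [hr]; intro hh; injection hh with h1 h2
    exact hab (by rw [← h1]; simp)
  have d4 : o2P (a, b) ≠ (a, b) := by
    rw [ho2]; intro hh; injection hh with h1 h2
    refine hDD ⟨h1.symm, ?_⟩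
    rw [h1] at h2
    exact cube a h2
  have d5 : tP (a, b) ≠ (a, b) := by
    rw [ht]; intro hh; injection hh with h1 h2; exact ha (mul_eq_right.mp h2)
  have d6 : oP (a, b) ≠ sP (a, b) := by
    rw [ho, hs]; intro hh; injection hh with h1 h2
    exact hab (by rw [h2]; simp)
  have d7 : rP (a, b) ≠ sP (a, b) := by
    rw [hr, hs]; intro hh; injection hh with h1 h2
    have hab' : a = b := inv_injective h2
    refine hDD ⟨hab', ?_⟩
    rw [← hab'] at h1
    refine cube a ?_
    rw [← h1]
    exact inv_inv a
  have d8 : o2P (a, b) ≠ sP (a, b) := by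
    rw [ho2, hs]; intro hh; injection hh with h1 h2
    exact ha (right_eq_mul.mp h1)
  have d9 : tP (a, b) ≠ sP (a, b) := by
    rw [ht, hs]; intro hh; injection hh with h1 h2
    have hab' : a = b := inv_injective (h1.trans h2)
    refine hDD ⟨hab', ?_⟩
    rw [← hab'] at h1
    refine cube a ?_
    rw [← h1]
    exact inv_inv a
  have d10 : rP (a, b) ≠ oP (a, b) := by
    rw [hr, ho]; intro hh; injection hh with h1 h2
    have : b = a * b := inv_injective h1
    exact ha (right_eq_mul.mp this)
  have d11 : o2P (a, b) ≠ oP (a, b) := by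
    rw [ho2, ho]; intro hh; injection hh with h1 h2
    have hab' : a = b := (h1.trans h2).symm
    refine hDD ⟨hab', ?_⟩
    rw [← hab'] at h2
    exact cube a h2
  have d12 : tP (a, b) ≠ oP (a, b) := by
    rw [ht, ho]; intro hh; injection hh with h1 h2
    exact hb (mul_eq_left.mp h2)
  have d13 : o2P (a, b) ≠ rP (a, b) := by
    rw [ho2, hr]; intro hh; injection hh with h1 h2
    have : a * b = a := inv_injective h2
    exact hb (mul_eq_left.mp this)
  have d14 : tP (a, b) ≠ rP (a, b) := by
    rw [ht, hr]; intro hh; injection hh with h1 h2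
    have hab' : a = b := inv_injective h1
    refine hDD ⟨hab', ?_⟩
    rw [← hab'] at h2
    refine cube a ?_
    rw [h2]
    exact inv_inv a
  have d15 : tP (a, b) ≠ o2P (a, b) := by
    rw [ht, ho2]; intro hh; injection hh with h1 h2
    exact hab (by rw [← h1]; simp)
  refine ⟨?_, ?_, ?_, ?_, ?_, ?_⟩
  · rw [val, if_pos rfl]
  · rw [val, if_neg d1, if_pos rfl]
  · rw [val, if_neg d2, if_neg d6, if_pos rfl]
  · rw [val, if_neg d3, if_neg d7, if_neg d10, if_pos rfl]
  · rw [val, if_neg d4, if_neg d8, if_neg d11, if_neg d13, if_pos rfl]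
  · rw [val, if_neg d5, if_neg d9, if_neg d12, if_neg d14, if_neg d15, if_pos rfl]
end W


section StageB

theorem stageB (H K : Subgroup G) (ω : G → G → G → Circle)
    (hω : ∀ g1 g2 g3 g4 : G,
      ω g1 g2 g3 * ω g1 (g2 * g3) g4 * ω g2 g3 g4 =
        ω (g1 * g2) g3 g4 * ω g1 g2 (g3 * g4))
    (hnorm : ∀ g1 g2 g3 : G, (g1 = 1 ∨ g2 = 1 ∨ g3 = 1) → ω g1 g2 g3 = 1)
    (hH : ∀ h1 h2 h3 : G, h1 ∈ H → h2 ∈ H → h3 ∈ H → ω h1 h2 h3 = 1)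
    (hK : ∀ k1 k2 k3 : G, k1 ∈ K → k2 ∈ K → k3 ∈ K → ω k1 k2 k3 = 1) :
    ∃ φ1 : G → G → Circle,
      (∀ g : G, φ1 g 1 = 1 ∧ φ1 1 g = 1) ∧
      (∀ a b : G, a ∈ H → b ∈ H → φ1 a b = 1) ∧
      (∀ a b : G, a ∈ K → b ∈ K → φ1 a b = 1) ∧
      (∀ l g : G, (l ∈ H ∨ l ∈ K) → coboundary2 φ1 l⁻¹ l g * ω l⁻¹ l g = 1) := by
  have h1m : (1 : G) ∈ H ∨ (1 : G) ∈ K := Or.inl H.one_mem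
  refine ⟨fun a b => if a ∈ H ∨ a ∈ K then (csqrt (ω a⁻¹ a b))⁻¹ else 1, ?_, ?_, ?_, ?_⟩
  · intro g
    constructor
    · by_cases h : g ∈ H ∨ g ∈ K <;>
        simp [h, hnorm g⁻¹ g 1 (Or.inr (Or.inr rfl)), csqrt_one]
    · simp [h1m, inv_one, hnorm 1 1 g (Or.inl rfl), csqrt_one]
  · intro a b ha hb
    simp only [if_pos (Or.inl ha : a ∈ H ∨ a ∈ K),
      hH a⁻¹ a b (inv_mem ha) ha hb, csqrt_one, inv_one]
  · intro a b ha hb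
    simp only [if_pos (Or.inr ha : a ∈ H ∨ a ∈ K),
      hK a⁻¹ a b (inv_mem ha) ha hb, csqrt_one, inv_one]
  · intro l g hl
    have hl' : l⁻¹ ∈ H ∨ l⁻¹ ∈ K := by
      rcases hl with h | h
      · exact Or.inl (inv_mem h)
      · exact Or.inr (inv_mem h)
    have hll : ω l l⁻¹ l = 1 := by
      rcases hl with h | h
      · exact hH _ _ _ h (inv_mem h) h
      · exact hK _ _ _ h (inv_mem h) h
    have key : ω l l⁻¹ (l * g) = ω l⁻¹ l g := by
      have h := hω l l⁻¹ l g
      rw [inv_mul_cancel, mul_inv_cancel, hll,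
        hnorm l 1 g (Or.inr (Or.inl rfl)), hnorm 1 l g (Or.inl rfl)] at h
      simpa using h.symm
    rw [coboundary2]
    simp only [inv_mul_cancel, if_pos hl, if_pos h1m, if_pos hl', inv_inv, inv_one, key, hll,
      hnorm 1 1 g (Or.inl rfl), csqrt_one]
    rw [mul_one, mul_one, ← mul_inv_rev, csqrt_sq, inv_mul_cancel]

end StageB


section StageC

theorem stageC (H K : Subgroup G) (om : G → G → G → Circle)
    (hco : ∀ g1 g2 g3 g4 : G,
      om g1 g2 g3 * om g1 (g2 * g3) g4 * om g2 g3 g4 =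
        om (g1 * g2) g3 g4 * om g1 g2 (g3 * g4))
    (hn : ∀ g1 g2 g3 : G, (g1 = 1 ∨ g2 = 1 ∨ g3 = 1) → om g1 g2 g3 = 1)
    (hH1 : ∀ h1 h2 h3 : G, h1 ∈ H → h2 ∈ H → h3 ∈ H → om h1 h2 h3 = 1)
    (hK1 : ∀ k1 k2 k3 : G, k1 ∈ K → k2 ∈ K → k3 ∈ K → om k1 k2 k3 = 1)
    (hP2 : ∀ l g : G, (l ∈ H ∨ l ∈ K) → om l⁻¹ l g = 1) :
    ∃ φ2 : G → G → Circle,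
      (∀ g : G, φ2 g 1 = 1 ∧ φ2 1 g = 1) ∧
      (∀ a b : G, a * b = 1 → φ2 a b = 1) ∧
      (∀ a b : G, a ∈ H → b ∈ H → φ2 a b = 1) ∧
      (∀ a b : G, a ∈ K → b ∈ K → φ2 a b = 1) ∧
      (∀ g l : G, (l ∈ H ∨ l ∈ K) → φ2 (g * l) l⁻¹ * φ2 g l = om g l l⁻¹) ∧
      (∀ g l : G, (l ∈ H ∨ l ∈ K) → φ2 l g * φ2 l⁻¹ (l * g) = 1) := by
  classical
  set S : G → Prop := fun l => l ∈ H ∨ l ∈ K with hS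
  have hSinv : ∀ l : G, S l → S l⁻¹ := by
    rintro l (h | h)
    · exact Or.inl (inv_mem h)
    · exact Or.inr (inv_mem h)
  have P3 : ∀ l g : G, S l → om l l⁻¹ g = 1 := by
    intro l g hl
    have := hP2 l⁻¹ g (hSinv l hl)
    rwa [inv_inv] at this
  set c1 : G → G → Circle := fun g l => om g l l⁻¹ with hc1
  have hc1' : ∀ g l : G, c1 g l = om g l l⁻¹ := fun g l => rfl
  have F1 : ∀ g l : G, S l → c1 (g * l) l⁻¹ = c1 g l := by
    intro g l hl
    have h := hco g l l⁻¹ l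
    rw [mul_inv_cancel, inv_mul_cancel, P3 l l hl,
      hn g 1 l (Or.inr (Or.inl rfl)), hn g l 1 (Or.inr (Or.inr rfl))] at h
    simp only [hc1', inv_inv]
    simpa using h.symm
  -- the hexagon identity
  have hFid : ∀ a b : G, S a → S b → S (a * b) →
      c1 a b * c1 (a * b)⁻¹ a * c1 b (a * b)⁻¹ = 1 := by
    intro a b ha hb hab
    have E1 : c1 a b = om (a * b) b⁻¹ a⁻¹ * om a b (a * b)⁻¹ := by
      have h := hco a b b⁻¹ a⁻¹
      rw [mul_inv_cancel, hn a 1 a⁻¹ (Or.inr (Or.inl rfl)), P3 b a⁻¹ hb,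
        ← mul_inv_rev] at h
      simpa [hc1'] using h
    have E2 : c1 (a * b)⁻¹ a = om b⁻¹ a⁻¹ (a * b) * om (a * b)⁻¹ a b := by
      have h := hco (a * b)⁻¹ a a⁻¹ (a * b)
      have e1 : (a * b)⁻¹ * a = b⁻¹ := by group
      have e2 : a⁻¹ * (a * b) = b := by group
      rw [mul_inv_cancel, hn _ 1 _ (Or.inr (Or.inl rfl)), P3 a (a * b) ha,
        e1, e2] at h
      simpa [hc1'] using h
    have E3 : om a b (a * b)⁻¹ * c1 b (a * b)⁻¹ = 1 := by
      have h := hco a b (a * b)⁻¹ (a * b)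
      have e1 : b * (a * b)⁻¹ = a⁻¹ := by group
      rw [e1, P3 a (a * b) ha, inv_mul_cancel,
        hn a b 1 (Or.inr (Or.inr rfl)), P3 (a * b) (a * b) hab] at h
      simpa [hc1', inv_inv] using h
    have E4 : om (a * b) b⁻¹ a⁻¹ * om b⁻¹ a⁻¹ (a * b) = c1 a b := by
      have h := hco (a * b) b⁻¹ a⁻¹ (a * b)
      have e1 : a * b * b⁻¹ = a := by group
      have e2 : a⁻¹ * (a * b) = b := by group
      rw [← mul_inv_rev, P3 (a * b) (a * b) hab, e1, e2, P3 a (a * b) ha] at h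
      have h3 : om (a * b) b⁻¹ b = c1 a b := by
        have h4 := F1 a b hb
        rw [hc1', inv_inv] at h4
        exact h4
      rw [h3] at h
      simpa using h
    have E5 : om (a * b)⁻¹ a b * c1 a b = 1 := by
      have h := hco (a * b)⁻¹ a b b⁻¹
      have e1 : (a * b)⁻¹ * a = b⁻¹ := by group
      rw [e1, mul_inv_cancel, hn _ _ 1 (Or.inr (Or.inr rfl)),
        hP2 (a * b) b⁻¹ hab, hP2 b b⁻¹ hb] at h
      simpa [hc1'] using h
    calc c1 a b * c1 (a * b)⁻¹ a * c1 b (a * b)⁻¹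
        = (om (a * b) b⁻¹ a⁻¹ * om b⁻¹ a⁻¹ (a * b)) *
            ((om a b (a * b)⁻¹ * c1 b (a * b)⁻¹) * om (a * b)⁻¹ a b) := by
          rw [E1, E2]
          apply circle_eq_add
          simp only [ofMul_mul]
          abel
      _ = c1 a b * (1 * om (a * b)⁻¹ a b) := by rw [E4, E3]
      _ = 1 := by rw [one_mul, mul_comm]; exact E5
  -- c1 trivialities
  have c1_one1 : ∀ l : G, c1 1 l = 1 := fun l => hn 1 l l⁻¹ (Or.inl rfl)
  have c1_one2 : ∀ g : G, c1 g 1 = 1 := fun g => hn g 1 1⁻¹ (Or.inr (Or.inl rfl))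
  have c1_invp : ∀ l : G, S l → c1 l⁻¹ l = 1 := fun l hl => hP2 l l⁻¹ hl
  have c1_T : ∀ x : G × G, Tsub H K x → c1 x.1 x.2 = 1 := by
    rintro ⟨a, b⟩ (⟨h1, h2⟩ | ⟨h1, h2⟩)
    · exact hH1 a b b⁻¹ h1 h2 (inv_mem h2)
    · exact hK1 a b b⁻¹ h1 h2 (inv_mem h2)
  -- the 2-cochain on pairs
  set f : G × G → Circle := fun x =>
    if Ndeg x then 1 else if Tsub H K x then 1 else if Ddeg x then 1
    else val S c1 (rep x) x with hf
  have f_one : ∀ x : G × G, Ndeg x ∨ Tsub H K x ∨ Ddeg x → f x = 1 := by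
    intro x h
    by_cases h1 : Ndeg x
    · simp only [hf]; rw [if_pos h1]
    by_cases h2 : Tsub H K x
    · simp only [hf]; rw [if_neg h1, if_pos h2]
    rcases h with h | h | h
    · exact absurd h h1
    · exact absurd h h2
    · simp only [hf]; rw [if_neg h1, if_neg h2, if_pos h]
  have f_eval : ∀ x : G × G, ¬ Ndeg x → ¬ Tsub H K x → ¬ Ddeg x →
      f x = val S c1 (rep x) x := by
    intro x h1 h2 h3
    simp only [hf]; rw [if_neg h1, if_neg h2, if_neg h3]
  have N_iff : ∀ x y : G × G, inE x y → (Ndeg y ↔ Ndeg x) := by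
    intro x y h
    rcases h with rfl | rfl | rfl | rfl | rfl | rfl
    exacts [Iff.rfl, N_sP x, N_tP x, N_rP x, N_oP x, N_o2P x]
  have T_iff : ∀ x y : G × G, inE x y → (Tsub H K y ↔ Tsub H K x) := by
    intro x y h
    rcases h with rfl | rfl | rfl | rfl | rfl | rfl
    exacts [Iff.rfl, T_sP H K x, T_tP H K x, T_rP H K x, T_oP H K x, T_o2P H K x]
  have D_iff : ∀ x y : G × G, inE x y → (Ddeg y ↔ Ddeg x) := by
    intro x y h
    rcases h with rfl | rfl | rfl | rfl | rfl | rfl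
    exacts [Iff.rfl, D_sP x, D_tP x, D_rP x, D_oP x, D_o2P x]
  -- main edge computations
  have EdgeB : ∀ x : G × G, S x.2 → f x * f (sP x) = c1 x.1 x.2 := by
    intro x hx2
    by_cases hN : Ndeg x
    · rw [f_one x (Or.inl hN), f_one (sP x) (Or.inl ((N_sP x).mpr hN)), one_mul]
      symm
      rcases hN with h | h | h
      · rw [show x.1 = 1 from h]; exact c1_one1 x.2
      · rw [show x.2 = 1 from h]; exact c1_one2 x.1
      · rw [show x.1 = x.2⁻¹ from eq_inv_of_mul_eq_one_left h]
        exact c1_invp x.2 hx2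
    by_cases hT : Tsub H K x
    · rw [f_one x (Or.inr (Or.inl hT)), f_one (sP x) (Or.inr (Or.inl ((T_sP H K x).mpr hT))),
        one_mul]
      exact (c1_T x hT).symm
    by_cases hD : Ddeg x
    · exfalso
      apply hT
      rcases hx2 with h | h
      · exact Or.inl ⟨by rw [hD.1]; exact h, h⟩
      · exact Or.inr ⟨by rw [hD.1]; exact h, h⟩
    -- main case
    set r : G × G := rep x with hr
    have hin : inE r x := rep_inE x
    have hrr : rep r = r := rep_eq_of_inE (rep_inE x)
    have hNr : ¬ Ndeg r := fun h => hN ((N_iff r x hin).mpr h)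
    have hTr : ¬ Tsub H K r := fun h => hT ((T_iff r x hin).mpr h)
    have hDr : ¬ Ddeg r := fun h => hD ((D_iff r x hin).mpr h)
    have hNall : ∀ y, inE r y → ¬ Ndeg y := fun y h hy => hNr ((N_iff r y h).mp hy)
    have hTall : ∀ y, inE r y → ¬ Tsub H K y := fun y h hy => hTr ((T_iff r y h).mp hy)
    have hDall : ∀ y, inE r y → ¬ Ddeg y := fun y h hy => hDr ((D_iff r y h).mp hy)
    have pos_val : ∀ y, inE r y → f y = val S c1 r y := by
      intro y h
      rw [f_eval y (hNall y h) (hTall y h) (hDall y h),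
        show rep y = r from (rep_eq_of_inE h).symm.trans hrr]
    obtain ⟨V0, V1, V2, V3, V4, V5⟩ := val_evals S c1 r hNr hDr
    have i0 : inE r r := Or.inl rfl
    have i1 : inE r (sP r) := Or.inr (Or.inl rfl)
    have i5 : inE r (tP r) := Or.inr (Or.inr (Or.inl rfl))
    have i3 : inE r (rP r) := Or.inr (Or.inr (Or.inr (Or.inl rfl)))
    have i2 : inE r (oP r) := Or.inr (Or.inr (Or.inr (Or.inr (Or.inl rfl))))
    have i4 : inE r (o2P r) := Or.inr (Or.inr (Or.inr (Or.inr (Or.inr rfl))))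
    rcases hin with hx | hx | hx | hx | hx | hx
    · -- x = r
      rw [hx] at hx2 ⊢
      rw [pos_val r i0, pos_val (sP r) i1, V0, V1]
      exact e01 S c1 r.1 r.2 hx2
    · -- x = sP r
      rw [hx] at hx2 ⊢
      have hb : S r.2 := by
        have h' : S r.2⁻¹⁻¹ := hSinv _ hx2
        rwa [inv_inv] at h'
      rw [pos_val (sP r) i1, sP_sP, pos_val r i0, V0, V1]
      show w1 S c1 r.1 r.2 * w0 S c1 r.1 r.2 = c1 (r.1 * r.2) r.2⁻¹
      rw [F1 r.1 r.2 hb, mul_comm]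
      exact e01 S c1 r.1 r.2 hb
    · -- x = tP r
      rw [hx] at hx2 ⊢
      have hC : S (r.1 * r.2) := hx2
      rw [pos_val (tP r) i5, sP_tP, pos_val (o2P r) i4, V5, V4]
      show w5 S c1 r.1 r.2 * w4 S c1 r.1 r.2 = c1 r.1⁻¹ (r.1 * r.2)
      have hF1 : c1 (r.1⁻¹ * (r.1 * r.2)) (r.1 * r.2)⁻¹ = c1 r.1⁻¹ (r.1 * r.2) :=
        F1 r.1⁻¹ (r.1 * r.2) hC
      rw [inv_mul_cancel_left] at hF1
      rw [← hF1, mul_comm]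
      exact e45 S c1 r.1 r.2 (hFid r.1 r.2) hC
    · -- x = rP r
      rw [hx] at hx2 ⊢
      have hA : S r.1 := by
        have h' : S r.1⁻¹⁻¹ := hSinv _ hx2
        rwa [inv_inv] at h'
      rw [pos_val (rP r) i3, sP_rP, pos_val (oP r) i2, V3, V2]
      show w3 S c1 r.1 r.2 * w2 S c1 r.1 r.2 = c1 r.2⁻¹ r.1⁻¹
      have hF1 : c1 ((r.1 * r.2)⁻¹ * r.1) r.1⁻¹ = c1 (r.1 * r.2)⁻¹ r.1 :=
        F1 (r.1 * r.2)⁻¹ r.1 hA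
      have e : (r.1 * r.2)⁻¹ * r.1 = r.2⁻¹ := by group
      rw [e] at hF1
      rw [hF1, mul_comm]
      exact e23 S c1 r.1 r.2 hA
    · -- x = oP r
      rw [hx] at hx2 ⊢
      have hA : S r.1 := hx2
      rw [pos_val (oP r) i2, sP_oP, pos_val (rP r) i3, V2, V3]
      exact e23 S c1 r.1 r.2 hA
    · -- x = o2P r
      rw [hx] at hx2 ⊢
      have hC : S (r.1 * r.2) := by
        have h' : S (r.1 * r.2)⁻¹⁻¹ := hSinv _ hx2
        rwa [inv_inv] at h'
      rw [pos_val (o2P r) i4, sP_o2P, pos_val (tP r) i5, V4, V5]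
      exact e45 S c1 r.1 r.2 (hFid r.1 r.2) hC
  have EdgeC : ∀ x : G × G, S x.1 → f x * f (tP x) = 1 := by
    intro x hx1
    by_cases hN : Ndeg x
    · rw [f_one x (Or.inl hN), f_one (tP x) (Or.inl ((N_tP x).mpr hN)), one_mul]
    by_cases hT : Tsub H K x
    · rw [f_one x (Or.inr (Or.inl hT)),
        f_one (tP x) (Or.inr (Or.inl ((T_tP H K x).mpr hT))), one_mul]
    by_cases hD : Ddeg x
    · exfalso
      apply hT
      rcases hx1 with h | h
      · exact Or.inl ⟨h, by rw [← hD.1]; exact h⟩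
      · exact Or.inr ⟨h, by rw [← hD.1]; exact h⟩
    set r : G × G := rep x with hr
    have hin : inE r x := rep_inE x
    have hrr : rep r = r := rep_eq_of_inE (rep_inE x)
    have hNr : ¬ Ndeg r := fun h => hN ((N_iff r x hin).mpr h)
    have hTr : ¬ Tsub H K r := fun h => hT ((T_iff r x hin).mpr h)
    have hDr : ¬ Ddeg r := fun h => hD ((D_iff r x hin).mpr h)
    have hNall : ∀ y, inE r y → ¬ Ndeg y := fun y h hy => hNr ((N_iff r y h).mp hy)
    have hTall : ∀ y, inE r y → ¬ Tsub H K y := fun y h hy => hTr ((T_iff r y h).mp hy)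
    have hDall : ∀ y, inE r y → ¬ Ddeg y := fun y h hy => hDr ((D_iff r y h).mp hy)
    have pos_val : ∀ y, inE r y → f y = val S c1 r y := by
      intro y h
      rw [f_eval y (hNall y h) (hTall y h) (hDall y h),
        show rep y = r from (rep_eq_of_inE h).symm.trans hrr]
    obtain ⟨V0, V1, V2, V3, V4, V5⟩ := val_evals S c1 r hNr hDr
    have i0 : inE r r := Or.inl rfl
    have i1 : inE r (sP r) := Or.inr (Or.inl rfl)
    have i5 : inE r (tP r) := Or.inr (Or.inr (Or.inl rfl))
    have i3 : inE r (rP r) := Or.inr (Or.inr (Or.inr (Or.inl rfl)))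
    have i2 : inE r (oP r) := Or.inr (Or.inr (Or.inr (Or.inr (Or.inl rfl))))
    have i4 : inE r (o2P r) := Or.inr (Or.inr (Or.inr (Or.inr (Or.inr rfl))))
    rcases hin with hx | hx | hx | hx | hx | hx
    · -- x = r
      rw [hx] at hx1 ⊢
      rw [pos_val r i0, pos_val (tP r) i5, V0, V5, mul_comm]
      exact e50 S c1 r.1 r.2 hx1
    · -- x = sP r
      rw [hx] at hx1 ⊢
      have hC : S (r.1 * r.2) := hx1
      rw [pos_val (sP r) i1, tP_sP, pos_val (oP r) i2, V1, V2]
      exact e12 S c1 r.1 r.2 hC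
    · -- x = tP r
      rw [hx] at hx1 ⊢
      have hA : S r.1 := by
        have h' : S r.1⁻¹⁻¹ := hSinv _ hx1
        rwa [inv_inv] at h'
      rw [pos_val (tP r) i5, tP_tP, pos_val r i0, V5, V0]
      exact e50 S c1 r.1 r.2 hA
    · -- x = rP r
      rw [hx] at hx1 ⊢
      have hb : S r.2 := by
        have h' : S r.2⁻¹⁻¹ := hSinv _ hx1
        rwa [inv_inv] at h'
      rw [pos_val (rP r) i3, tP_rP, pos_val (o2P r) i4, V3, V4]
      exact e34 S c1 r.1 r.2 hb
    · -- x = oP r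
      rw [hx] at hx1 ⊢
      have hC : S (r.1 * r.2) := by
        have h' : S (r.1 * r.2)⁻¹⁻¹ := hSinv _ hx1
        rwa [inv_inv] at h'
      rw [pos_val (oP r) i2, tP_oP, pos_val (sP r) i1, V2, V1, mul_comm]
      exact e12 S c1 r.1 r.2 hC
    · -- x = o2P r
      rw [hx] at hx1 ⊢
      have hb : S r.2 := hx1
      rw [pos_val (o2P r) i4, tP_o2P, pos_val (rP r) i3, V4, V3, mul_comm]
      exact e34 S c1 r.1 r.2 hb
  refine ⟨fun a b => f (a, b), ?_, ?_, ?_, ?_, ?_, ?_⟩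
  · intro g
    exact ⟨f_one (g, 1) (Or.inl (Or.inr (Or.inl rfl))),
      f_one (1, g) (Or.inl (Or.inl rfl))⟩
  · intro a b h
    exact f_one (a, b) (Or.inl (Or.inr (Or.inr h)))
  · intro a b ha hb
    exact f_one (a, b) (Or.inr (Or.inl (Or.inl ⟨ha, hb⟩)))
  · intro a b ha hb
    exact f_one (a, b) (Or.inr (Or.inl (Or.inr ⟨ha, hb⟩)))
  · intro g l hl
    have h := EdgeB (g, l) hl
    rw [mul_comm] at h
    exact h
  · intro g l hl
    exact EdgeC (l, g) hl

end StageC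

lemma mul3_mul2 {A1 B1 A2 B2 A3 B3 A4 B4 A5 B5 : Circle}
    (h1 : A1 * A2 * A3 = A4 * A5) (h2 : B1 * B2 * B3 = B4 * B5) :
    (A1 * B1) * (A2 * B2) * (A3 * B3) = (A4 * B4) * (A5 * B5) := by
  have e1 : (A1 * B1) * (A2 * B2) * (A3 * B3) = (A1 * A2 * A3) * (B1 * B2 * B3) := by
    apply circle_eq_add; simp only [ofMul_mul]; abel
  rw [e1, h1, h2]
  apply circle_eq_add; simp only [ofMul_mul]; abel

end Stmt8Aux

/-- Lemma 4.1: a normalized 3-cocycle `ω` of `G = ⟨H, K⟩` which is trivial on `H³` and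
on `K³` is coboundarily equivalent, via a normalized 2-cochain whose coboundary is
trivial on `H³` and `K³`, to a normalized 3-cocycle `ω'` which is still trivial on `H³`
and `K³` and moreover satisfies `ω'(g,l,l⁻¹) = 1 = ω'(l⁻¹,l,g)` for all
`g ∈ G`, `l ∈ H ∪ K`. -/
theorem stmt_8 {G : Type*} [Group G] (H K : Subgroup G)
    (hGen : Subgroup.closure ((H : Set G) ∪ (K : Set G)) = ⊤)
    (ω : G → G → G → Circle)
    (hω : ∀ g1 g2 g3 g4 : G,
      ω g1 g2 g3 * ω g1 (g2 * g3) g4 * ω g2 g3 g4 =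
        ω (g1 * g2) g3 g4 * ω g1 g2 (g3 * g4))
    (hnorm : ∀ g1 g2 g3 : G, (g1 = 1 ∨ g2 = 1 ∨ g3 = 1) → ω g1 g2 g3 = 1)
    (hH : ∀ h1 h2 h3 : G, h1 ∈ H → h2 ∈ H → h3 ∈ H → ω h1 h2 h3 = 1)
    (hK : ∀ k1 k2 k3 : G, k1 ∈ K → k2 ∈ K → k3 ∈ K → ω k1 k2 k3 = 1) :
    ∃ φ : G → G → Circle,
      (∀ g : G, φ g 1 = 1 ∧ φ 1 g = 1) ∧
      (∀ h1 h2 h3 : G, h1 ∈ H → h2 ∈ H → h3 ∈ H → coboundary2 φ h1 h2 h3 = 1) ∧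
      (∀ k1 k2 k3 : G, k1 ∈ K → k2 ∈ K → k3 ∈ K → coboundary2 φ k1 k2 k3 = 1) ∧
      (∀ g1 g2 g3 : G, (g1 = 1 ∨ g2 = 1 ∨ g3 = 1) →
        coboundary2 φ g1 g2 g3 * ω g1 g2 g3 = 1) ∧
      (∀ h1 h2 h3 : G, h1 ∈ H → h2 ∈ H → h3 ∈ H →
        coboundary2 φ h1 h2 h3 * ω h1 h2 h3 = 1) ∧
      (∀ k1 k2 k3 : G, k1 ∈ K → k2 ∈ K → k3 ∈ K →
        coboundary2 φ k1 k2 k3 * ω k1 k2 k3 = 1) ∧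
      (∀ g l : G, (l ∈ H ∨ l ∈ K) →
        coboundary2 φ g l l⁻¹ * ω g l l⁻¹ = 1 ∧
        coboundary2 φ l⁻¹ l g * ω l⁻¹ l g = 1) := by
  classical
  obtain ⟨φ1, h1norm, h1H, h1K, h1P2⟩ := Stmt8Aux.stageB H K ω hω hnorm hH hK
  set ω₁ : G → G → G → Circle := fun a b c => coboundary2 φ1 a b c * ω a b c with hω₁
  have hco1 : ∀ g1 g2 g3 g4 : G,
      ω₁ g1 g2 g3 * ω₁ g1 (g2 * g3) g4 * ω₁ g2 g3 g4 =
        ω₁ (g1 * g2) g3 g4 * ω₁ g1 g2 (g3 * g4) := by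
    intro g1 g2 g3 g4
    simp only [hω₁]
    exact Stmt8Aux.mul3_mul2 (Stmt8Aux.coboundary2_cocycle φ1 g1 g2 g3 g4) (hω g1 g2 g3 g4)
  have hn1 : ∀ g1 g2 g3 : G, (g1 = 1 ∨ g2 = 1 ∨ g3 = 1) → ω₁ g1 g2 g3 = 1 := by
    intro g1 g2 g3 h
    simp only [hω₁]
    rw [Stmt8Aux.coboundary2_norm φ1 h1norm g1 g2 g3 h, hnorm g1 g2 g3 h, one_mul]
  have hH1 : ∀ h1 h2 h3 : G, h1 ∈ H → h2 ∈ H → h3 ∈ H → ω₁ h1 h2 h3 = 1 := by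
    intro a b c ha hb hc
    simp only [hω₁]
    rw [Stmt8Aux.coboundary2_triv φ1 (· ∈ H) (fun _ _ => mul_mem) h1H a b c ha hb hc,
      hH a b c ha hb hc, one_mul]
  have hK1 : ∀ a b c : G, a ∈ K → b ∈ K → c ∈ K → ω₁ a b c = 1 := by
    intro a b c ha hb hc
    simp only [hω₁]
    rw [Stmt8Aux.coboundary2_triv φ1 (· ∈ K) (fun _ _ => mul_mem) h1K a b c ha hb hc,
      hK a b c ha hb hc, one_mul]
  have hP2' : ∀ l g : G, (l ∈ H ∨ l ∈ K) → ω₁ l⁻¹ l g = 1 := by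
    intro l g hl
    simp only [hω₁]
    exact h1P2 l g hl
  obtain ⟨φ2, h2norm, h2inv, h2H, h2K, h2B, h2C⟩ :=
    Stmt8Aux.stageC H K ω₁ hco1 hn1 hH1 hK1 hP2'
  have key : ∀ x y z : G,
      coboundary2 (fun a b => φ1 a b * φ2 a b) x y z * ω x y z =
        coboundary2 φ2 x y z * ω₁ x y z := by
    intro x y z
    rw [Stmt8Aux.coboundary2_mul φ1 φ2 x y z]
    simp only [hω₁]
    apply Stmt8Aux.circle_eq_add
    simp only [ofMul_mul]
    abel
  have φnorm : ∀ g : G, (fun a b => φ1 a b * φ2 a b) g 1 = 1 ∧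
      (fun a b => φ1 a b * φ2 a b) 1 g = 1 := by
    intro g
    constructor
    · show φ1 g 1 * φ2 g 1 = 1
      rw [(h1norm g).1, (h2norm g).1, one_mul]
    · show φ1 1 g * φ2 1 g = 1
      rw [(h1norm g).2, (h2norm g).2, one_mul]
  refine ⟨fun a b => φ1 a b * φ2 a b, φnorm, ?_, ?_, ?_, ?_, ?_, ?_⟩
  · intro a b c ha hb hc
    rw [Stmt8Aux.coboundary2_mul φ1 φ2 a b c,
      Stmt8Aux.coboundary2_triv φ1 (· ∈ H) (fun _ _ => mul_mem) h1H a b c ha hb hc,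
      Stmt8Aux.coboundary2_triv φ2 (· ∈ H) (fun _ _ => mul_mem) h2H a b c ha hb hc, one_mul]
  · intro a b c ha hb hc
    rw [Stmt8Aux.coboundary2_mul φ1 φ2 a b c,
      Stmt8Aux.coboundary2_triv φ1 (· ∈ K) (fun _ _ => mul_mem) h1K a b c ha hb hc,
      Stmt8Aux.coboundary2_triv φ2 (· ∈ K) (fun _ _ => mul_mem) h2K a b c ha hb hc, one_mul]
  · intro g1 g2 g3 h
    rw [Stmt8Aux.coboundary2_norm _ φnorm g1 g2 g3 h, hnorm g1 g2 g3 h, one_mul]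
  · intro a b c ha hb hc
    rw [key a b c, Stmt8Aux.coboundary2_triv φ2 (· ∈ H) (fun _ _ => mul_mem) h2H a b c ha hb hc,
      hH1 a b c ha hb hc, one_mul]
  · intro a b c ha hb hc
    rw [key a b c, Stmt8Aux.coboundary2_triv φ2 (· ∈ K) (fun _ _ => mul_mem) h2K a b c ha hb hc,
      hK1 a b c ha hb hc, one_mul]
  · intro g l hl
    constructor
    · rw [key g l l⁻¹]
      rw [coboundary2, h2inv l l⁻¹ (mul_inv_cancel l), mul_inv_cancel, (h2norm g).1]
      rw [← h2B g l hl]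
      apply Stmt8Aux.circle_eq_add
      simp only [ofMul_mul, ofMul_inv, ofMul_one]
      abel
    · rw [key l⁻¹ l g]
      rw [coboundary2, inv_mul_cancel, (h2norm g).2, h2inv l⁻¹ l (inv_mul_cancel l),
        hP2' l g hl]
      simp only [inv_one, mul_one, one_mul]
      exact h2C g l hl
end

section
/- With the tube algebra multiplication $a(g_2,t,g_3)\cdot a(g_1,s,g_2) = [\omega(g_1,s,t)\overline{\omega}(s,g_2,t)\omega(s,t,g_3)]\, a(g_1,st,g_3)$ and the involution $(a(g_1,s,g_2))^{\#} = [\overline{\omega}(g_1,s,s^{-1})\,\omega(s,g_2,s^{-1})\,\overline{\omega}(s,s^{-1},g_1)]\, a(g_2,s^{-1},g_1)$, the map $\#$ is an anti-multiplicative involution: $(x \cdot y)^{\#} = y^{\#} \cdot x^{\#}$ and $(x^{\#})^{\#} = x$, assuming $\omega$ is a normalized 3-cocycle. -/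
/-- Basis of the tube algebra: triples `(g₁, s, g₂)` with `g₁ s = s g₂`. -/
def TubeBasis (G : Type*) [Group G] : Type _ :=
  {p : G × G × G // p.1 * p.2.1 = p.2.1 * p.2.2}

/-- The flipped basis element `a(g₂, s⁻¹, g₁)` associated to `a(g₁, s, g₂)`. -/
def TubeBasis.flip {G : Type*} [Group G] (p : TubeBasis G) : TubeBasis G :=
  ⟨(p.1.2.2, p.1.2.1⁻¹, p.1.1), by
    have h : p.1.2.1⁻¹ * (p.1.1 * p.1.2.1) = p.1.2.2 := by
      rw [p.2]; group
    rw [← h]; group⟩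

/-- Product of basis elements: `a(g₂,t,g₃) ⬝ a(g₁,s,g₂) =
ω(g₁,s,t) ω̄(s,g₂,t) ω(s,t,g₃) a(g₁,st,g₃)`; `p` is the left factor `a(g₂,t,g₃)`
and `q` the right factor `a(g₁,s,g₂)`. -/
noncomputable def tubeMulBasis {G : Type*} [Group G] [DecidableEq G]
    (ω : G → G → G → Circle) (p q : TubeBasis G) : TubeBasis G →₀ ℂ :=
  if h : q.1.2.2 = p.1.1 then
    Finsupp.single
      (⟨(q.1.1, q.1.2.1 * p.1.2.1, p.1.2.2), by
        have r1 := q.2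
        have r2 := p.2
        rw [h] at r1
        calc q.1.1 * (q.1.2.1 * p.1.2.1) = q.1.1 * q.1.2.1 * p.1.2.1 := by group
          _ = q.1.2.1 * p.1.1 * p.1.2.1 := by rw [r1]
          _ = q.1.2.1 * (p.1.1 * p.1.2.1) := by group
          _ = q.1.2.1 * (p.1.2.1 * p.1.2.2) := by rw [r2]
          _ = q.1.2.1 * p.1.2.1 * p.1.2.2 := by group⟩ : TubeBasis G)
      ((ω q.1.1 q.1.2.1 p.1.2.1 * (ω q.1.2.1 q.1.2.2 p.1.2.1)⁻¹ *
          ω q.1.2.1 p.1.2.1 p.1.2.2 : Circle) : ℂ)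
  else 0

/-- The tube algebra multiplication (first argument is the left factor). -/
noncomputable def tubeMul {G : Type*} [Group G] [DecidableEq G]
    (ω : G → G → G → Circle) (x y : TubeBasis G →₀ ℂ) : TubeBasis G →₀ ℂ :=
  Finsupp.sum x fun p a => Finsupp.sum y fun q b => (a * b) • tubeMulBasis ω p q

/-- The involution `#`: `a(g₁,s,g₂)^# = ω̄(g₁,s,s⁻¹) ω(s,g₂,s⁻¹) ω̄(s,s⁻¹,g₁)
a(g₂,s⁻¹,g₁)`, extended conjugate-linearly. -/
noncomputable def tubeHash {G : Type*} [Group G] [DecidableEq G]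
    (ω : G → G → G → Circle) (x : TubeBasis G →₀ ℂ) : TubeBasis G →₀ ℂ :=
  Finsupp.sum x fun p a =>
    Finsupp.single p.flip
      ((starRingEnd ℂ) a *
        (((ω p.1.1 p.1.2.1 p.1.2.1⁻¹)⁻¹ * ω p.1.2.1 p.1.2.2 p.1.2.1⁻¹ *
            (ω p.1.2.1 p.1.2.1⁻¹ p.1.1)⁻¹ : Circle) : ℂ))

set_option linter.unusedSectionVars false
section Aux
variable {G : Type*} [Group G] [DecidableEq G] (ω : G → G → G → Circle)

lemma TubeBasis.flip_flip (p : TubeBasis G) : p.flip.flip = p := by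
  apply Subtype.ext
  obtain ⟨⟨g1, s, g2⟩, hp⟩ := p
  simp [TubeBasis.flip]

lemma tubeMul_zero_left (y : TubeBasis G →₀ ℂ) : tubeMul ω 0 y = 0 :=
  Finsupp.sum_zero_index

lemma tubeMul_zero_right (x : TubeBasis G →₀ ℂ) : tubeMul ω x 0 = 0 := by
  unfold tubeMul
  simp [Finsupp.sum_zero_index]

lemma tubeMul_add_left (x1 x2 y : TubeBasis G →₀ ℂ) :
    tubeMul ω (x1 + x2) y = tubeMul ω x1 y + tubeMul ω x2 y := by
  unfold tubeMul
  apply Finsupp.sum_add_index'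
  · intro p; simp
  · intro p a1 a2
    rw [← Finsupp.sum_add]
    apply Finsupp.sum_congr
    intro q _
    rw [add_mul, add_smul]

lemma tubeMul_add_right (x y1 y2 : TubeBasis G →₀ ℂ) :
    tubeMul ω x (y1 + y2) = tubeMul ω x y1 + tubeMul ω x y2 := by
  unfold tubeMul
  rw [← Finsupp.sum_add]
  apply Finsupp.sum_congr
  intro p _
  apply Finsupp.sum_add_index'
  · intro q; simp
  · intro q b1 b2; rw [mul_add, add_smul]

lemma tubeMul_single_single (p q : TubeBasis G) (a b : ℂ) :
    tubeMul ω (Finsupp.single p a) (Finsupp.single q b) =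
      (a * b) • tubeMulBasis ω p q := by
  unfold tubeMul
  rw [Finsupp.sum_single_index (by simp), Finsupp.sum_single_index (by simp)]

lemma tubeHash_zero : tubeHash ω 0 = 0 := Finsupp.sum_zero_index

lemma tubeHash_single (p : TubeBasis G) (a : ℂ) :
    tubeHash ω (Finsupp.single p a) =
      Finsupp.single p.flip
        ((starRingEnd ℂ) a *
          (((ω p.1.1 p.1.2.1 p.1.2.1⁻¹)⁻¹ * ω p.1.2.1 p.1.2.2 p.1.2.1⁻¹ *
              (ω p.1.2.1 p.1.2.1⁻¹ p.1.1)⁻¹ : Circle) : ℂ)) :=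
  Finsupp.sum_single_index (by simp)

lemma tubeHash_add (x y : TubeBasis G →₀ ℂ) :
    tubeHash ω (x + y) = tubeHash ω x + tubeHash ω y :=
  Finsupp.sum_add_index' (fun p => by simp)
    (fun p a1 a2 => by rw [map_add, add_mul, Finsupp.single_add])

end Aux

section Coc
set_option maxHeartbeats 1000000

variable {G : Type*} [Group G] (ω : G → G → G → Circle)

lemma cocA
    (hω : ∀ g1 g2 g3 g4 : G,
      ω g1 g2 g3 * ω g1 (g2 * g3) g4 * ω g2 g3 g4 =
        ω (g1 * g2) g3 g4 * ω g1 g2 (g3 * g4))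
    (hnorm : ∀ g1 g2 g3 : G, (g1 = 1 ∨ g2 = 1 ∨ g3 = 1) → ω g1 g2 g3 = 1)
    (g1 g2 s : G) (h1 : g1 * s = s * g2) :
    (ω s g2 s⁻¹ : ℂ) * ω g2 s⁻¹ s * ω s⁻¹ s g2 =
      (ω g1 s s⁻¹ : ℂ) * ω s s⁻¹ g1 * ω s⁻¹ g1 s := by
  have e1 : g2 * s⁻¹ = s⁻¹ * g1 := by
    apply mul_left_cancel (a := s)
    rw [← mul_assoc, ← h1]; group
  have j1 := hω s g2 s⁻¹ s
  rw [e1, inv_mul_cancel, hnorm s g2 1 (by simp), mul_one] at j1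
  have j2 := hω g1 s s⁻¹ s
  rw [h1, mul_inv_cancel, inv_mul_cancel, hnorm g1 1 s (by simp),
    hnorm g1 s 1 (by simp)] at j2
  simp only [mul_one, one_mul] at j2
  have j3 := hω s s⁻¹ g1 s
  rw [mul_inv_cancel, h1, hnorm 1 g1 s (by simp), one_mul] at j3
  have j4 := hω s s⁻¹ s g2
  rw [inv_mul_cancel, mul_inv_cancel, hnorm s 1 g2 (by simp),
    hnorm 1 s g2 (by simp)] at j4
  simp only [mul_one, one_mul] at j4
  -- push to ℂ
  have c1 := congrArg Circle.coeHom j1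
  have c2 := congrArg Circle.coeHom j2
  have c3 := congrArg Circle.coeHom j3
  have c4 := congrArg Circle.coeHom j4
  simp only [map_mul, Circle.coeHom_apply] at c1 c2 c3 c4
  have hCB0 : ((ω (s*g2) s⁻¹ s : ℂ)) * ((ω g1 s s⁻¹ : ℂ) * ω s s⁻¹ s) *
      ((ω s s⁻¹ g1 : ℂ) * ω s (s⁻¹*g1) s * ω s⁻¹ g1 s) * (ω s s⁻¹ (s*g2) : ℂ) ≠ 0 := by
    simp [mul_eq_zero]
  apply mul_right_cancel₀ hCB0
  have hC : ((ω s g2 s⁻¹ : ℂ) * ω s (s⁻¹*g1) s * ω g2 s⁻¹ s) * (ω (s*g2) s⁻¹ s : ℂ) *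
      (ω s s⁻¹ (s*g2) : ℂ) * ((ω s s⁻¹ s : ℂ) * ω s⁻¹ s g2) =
      ((ω (s*g2) s⁻¹ s : ℂ)) * ((ω g1 s s⁻¹ : ℂ) * ω s s⁻¹ s) *
      ((ω s s⁻¹ g1 : ℂ) * ω s (s⁻¹*g1) s * ω s⁻¹ g1 s) * (ω s s⁻¹ (s*g2) : ℂ) := by
    exact congrArg₂ (· * ·)
      (congrArg₂ (· * ·) (congrArg₂ (· * ·) c1 c2.symm) c3.symm) c4
  calc (ω s g2 s⁻¹ : ℂ) * ω g2 s⁻¹ s * ω s⁻¹ s g2 *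
        ((ω (s*g2) s⁻¹ s : ℂ) * ((ω g1 s s⁻¹ : ℂ) * ω s s⁻¹ s) *
         ((ω s s⁻¹ g1 : ℂ) * ω s (s⁻¹*g1) s * ω s⁻¹ g1 s) * (ω s s⁻¹ (s*g2) : ℂ))
      = (ω g1 s s⁻¹ : ℂ) * ω s s⁻¹ g1 * ω s⁻¹ g1 s *
        (((ω s g2 s⁻¹ : ℂ) * ω s (s⁻¹*g1) s * ω g2 s⁻¹ s) * (ω (s*g2) s⁻¹ s : ℂ) *
         (ω s s⁻¹ (s*g2) : ℂ) * ((ω s s⁻¹ s : ℂ) * ω s⁻¹ s g2)) := by ring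
    _ = _ := by rw [hC]

lemma cocB
    (hω : ∀ g1 g2 g3 g4 : G,
      ω g1 g2 g3 * ω g1 (g2 * g3) g4 * ω g2 g3 g4 =
        ω (g1 * g2) g3 g4 * ω g1 g2 (g3 * g4))
    (hnorm : ∀ g1 g2 g3 : G, (g1 = 1 ∨ g2 = 1 ∨ g3 = 1) → ω g1 g2 g3 = 1)
    (g1 g2 g3 s t : G) (h1 : g1 * s = s * g2) (h2 : g2 * t = t * g3) :
    (ω s g2 t : ℂ) * ω (s*t) g3 (s*t)⁻¹ * ω g2 t t⁻¹ * ω t t⁻¹ g2 *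
      ω g1 s s⁻¹ * ω s s⁻¹ g1 * ω t⁻¹ g2 s⁻¹ =
    (ω g1 s t : ℂ) * ω s t g3 * ω g1 (s*t) (s*t)⁻¹ * ω (s*t) (s*t)⁻¹ g1 *
      ω t g3 t⁻¹ * ω s g2 s⁻¹ * ω g3 t⁻¹ s⁻¹ * ω t⁻¹ s⁻¹ g1 := by
  have h3 : g1 * (s*t) = (s*t) * g3 := by
    rw [← mul_assoc, h1, mul_assoc, h2, ← mul_assoc]
  have e1 : g2 * s⁻¹ = s⁻¹ * g1 := by
    apply mul_left_cancel (a := s); rw [← mul_assoc, ← h1]; group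
  have e2 : g3 * t⁻¹ = t⁻¹ * g2 := by
    apply mul_left_cancel (a := t); rw [← mul_assoc, ← h2]; group
  have e3 : g3 * (s*t)⁻¹ = (s*t)⁻¹ * g1 := by
    apply mul_left_cancel (a := s*t); rw [← mul_assoc, ← h3]; group
  have e4 : t * (s*t)⁻¹ = s⁻¹ := by group
  have e5 : t⁻¹ * s⁻¹ = (s*t)⁻¹ := by group
  have i1 := hω g1 s t (s*t)⁻¹
  rw [h1, e4] at i1
  have i2 := hω g2 t t⁻¹ s⁻¹
  rw [mul_inv_cancel, hnorm g2 1 s⁻¹ (by simp), h2, e5, mul_one] at i2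
  have i3 := hω s g2 t (s*t)⁻¹
  rw [h2, e4] at i3
  have i4 := hω s t g3 (s*t)⁻¹
  rw [e3] at i4
  have i5 := hω s t (s*t)⁻¹ g1
  rw [e4] at i5
  have i6 := hω t g3 t⁻¹ s⁻¹
  rw [e2, e5] at i6
  have i7 := hω t t⁻¹ g2 s⁻¹
  rw [mul_inv_cancel, hnorm 1 g2 s⁻¹ (by simp), one_mul, e1] at i7
  have i8 := hω t t⁻¹ s⁻¹ g1
  rw [e5, mul_inv_cancel, hnorm 1 s⁻¹ g1 (by simp), one_mul] at i8
  have c1 := congrArg Circle.coeHom i1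
  have c2 := congrArg Circle.coeHom i2
  have c3 := congrArg Circle.coeHom i3
  have c4 := congrArg Circle.coeHom i4
  have c5 := congrArg Circle.coeHom i5
  have c6 := congrArg Circle.coeHom i6
  have c7 := congrArg Circle.coeHom i7
  have c8 := congrArg Circle.coeHom i8
  simp only [map_mul, Circle.coeHom_apply] at c1 c2 c3 c4 c5 c6 c7 c8
  -- CB = R1 * L2 * L3 * R4 * L5 * R6 * L7 * R8
  have hCB0 : ((ω (s*g2) t (s*t)⁻¹ : ℂ) * ω g1 s s⁻¹) *
      ((ω g2 t t⁻¹ : ℂ) * ω t t⁻¹ s⁻¹) *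
      ((ω s g2 t : ℂ) * ω s (t*g3) (s*t)⁻¹ * ω g2 t (s*t)⁻¹) *
      ((ω (s*t) g3 (s*t)⁻¹ : ℂ) * ω s t ((s*t)⁻¹*g1)) *
      ((ω s t (s*t)⁻¹ : ℂ) * ω s s⁻¹ g1 * ω t (s*t)⁻¹ g1) *
      ((ω (t*g3) t⁻¹ s⁻¹ : ℂ) * ω t g3 (s*t)⁻¹) *
      ((ω t t⁻¹ g2 : ℂ) * ω t (t⁻¹*g2) s⁻¹ * ω t⁻¹ g2 s⁻¹) *
      ((ω t t⁻¹ (s⁻¹*g1) : ℂ)) ≠ 0 := by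
    simp [mul_eq_zero]
  apply mul_right_cancel₀ hCB0
  have hC : ((ω g1 s t : ℂ) * ω g1 (s*t) (s*t)⁻¹ * ω s t (s*t)⁻¹) *
      ((ω (t*g3) t⁻¹ s⁻¹ : ℂ) * ω g2 t (s*t)⁻¹) *
      ((ω (s*g2) t (s*t)⁻¹ : ℂ) * ω s g2 s⁻¹) *
      ((ω s t g3 : ℂ) * ω s (t*g3) (s*t)⁻¹ * ω t g3 (s*t)⁻¹) *
      ((ω (s*t) (s*t)⁻¹ g1 : ℂ) * ω s t ((s*t)⁻¹*g1)) *
      ((ω t g3 t⁻¹ : ℂ) * ω t (t⁻¹*g2) s⁻¹ * ω g3 t⁻¹ s⁻¹) *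
      ((ω t t⁻¹ (s⁻¹*g1) : ℂ)) *
      ((ω t t⁻¹ s⁻¹ : ℂ) * ω t (s*t)⁻¹ g1 * ω t⁻¹ s⁻¹ g1) =
      ((ω (s*g2) t (s*t)⁻¹ : ℂ) * ω g1 s s⁻¹) *
      ((ω g2 t t⁻¹ : ℂ) * ω t t⁻¹ s⁻¹) *
      ((ω s g2 t : ℂ) * ω s (t*g3) (s*t)⁻¹ * ω g2 t (s*t)⁻¹) *
      ((ω (s*t) g3 (s*t)⁻¹ : ℂ) * ω s t ((s*t)⁻¹*g1)) *
      ((ω s t (s*t)⁻¹ : ℂ) * ω s s⁻¹ g1 * ω t (s*t)⁻¹ g1) *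
      ((ω (t*g3) t⁻¹ s⁻¹ : ℂ) * ω t g3 (s*t)⁻¹) *
      ((ω t t⁻¹ g2 : ℂ) * ω t (t⁻¹*g2) s⁻¹ * ω t⁻¹ g2 s⁻¹) *
      ((ω t t⁻¹ (s⁻¹*g1) : ℂ)) := by
    exact congrArg₂ (· * ·) (congrArg₂ (· * ·) (congrArg₂ (· * ·)
      (congrArg₂ (· * ·) (congrArg₂ (· * ·) (congrArg₂ (· * ·)
        (congrArg₂ (· * ·) c1 c2.symm) c3.symm) c4) c5.symm) c6) c7.symm) c8
  calc (ω s g2 t : ℂ) * ω (s*t) g3 (s*t)⁻¹ * ω g2 t t⁻¹ * ω t t⁻¹ g2 *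
        ω g1 s s⁻¹ * ω s s⁻¹ g1 * ω t⁻¹ g2 s⁻¹ *
        (((ω (s*g2) t (s*t)⁻¹ : ℂ) * ω g1 s s⁻¹) *
        ((ω g2 t t⁻¹ : ℂ) * ω t t⁻¹ s⁻¹) *
        ((ω s g2 t : ℂ) * ω s (t*g3) (s*t)⁻¹ * ω g2 t (s*t)⁻¹) *
        ((ω (s*t) g3 (s*t)⁻¹ : ℂ) * ω s t ((s*t)⁻¹*g1)) *
        ((ω s t (s*t)⁻¹ : ℂ) * ω s s⁻¹ g1 * ω t (s*t)⁻¹ g1) *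
        ((ω (t*g3) t⁻¹ s⁻¹ : ℂ) * ω t g3 (s*t)⁻¹) *
        ((ω t t⁻¹ g2 : ℂ) * ω t (t⁻¹*g2) s⁻¹ * ω t⁻¹ g2 s⁻¹) *
        ((ω t t⁻¹ (s⁻¹*g1) : ℂ)))
      = (ω s g2 t : ℂ) * ω (s*t) g3 (s*t)⁻¹ * ω g2 t t⁻¹ * ω t t⁻¹ g2 *
        ω g1 s s⁻¹ * ω s s⁻¹ g1 * ω t⁻¹ g2 s⁻¹ *
        (((ω g1 s t : ℂ) * ω g1 (s*t) (s*t)⁻¹ * ω s t (s*t)⁻¹) *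
        ((ω (t*g3) t⁻¹ s⁻¹ : ℂ) * ω g2 t (s*t)⁻¹) *
        ((ω (s*g2) t (s*t)⁻¹ : ℂ) * ω s g2 s⁻¹) *
        ((ω s t g3 : ℂ) * ω s (t*g3) (s*t)⁻¹ * ω t g3 (s*t)⁻¹) *
        ((ω (s*t) (s*t)⁻¹ g1 : ℂ) * ω s t ((s*t)⁻¹*g1)) *
        ((ω t g3 t⁻¹ : ℂ) * ω t (t⁻¹*g2) s⁻¹ * ω g3 t⁻¹ s⁻¹) *
        ((ω t t⁻¹ (s⁻¹*g1) : ℂ)) *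
        ((ω t t⁻¹ s⁻¹ : ℂ) * ω t (s*t)⁻¹ g1 * ω t⁻¹ s⁻¹ g1)) := by rw [hC]
    _ = (ω g1 s t : ℂ) * ω s t g3 * ω g1 (s*t) (s*t)⁻¹ * ω (s*t) (s*t)⁻¹ g1 *
        ω t g3 t⁻¹ * ω s g2 s⁻¹ * ω g3 t⁻¹ s⁻¹ * ω t⁻¹ s⁻¹ g1 *
        (((ω (s*g2) t (s*t)⁻¹ : ℂ) * ω g1 s s⁻¹) *
        ((ω g2 t t⁻¹ : ℂ) * ω t t⁻¹ s⁻¹) *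
        ((ω s g2 t : ℂ) * ω s (t*g3) (s*t)⁻¹ * ω g2 t (s*t)⁻¹) *
        ((ω (s*t) g3 (s*t)⁻¹ : ℂ) * ω s t ((s*t)⁻¹*g1)) *
        ((ω s t (s*t)⁻¹ : ℂ) * ω s s⁻¹ g1 * ω t (s*t)⁻¹ g1) *
        ((ω (t*g3) t⁻¹ s⁻¹ : ℂ) * ω t g3 (s*t)⁻¹) *
        ((ω t t⁻¹ g2 : ℂ) * ω t (t⁻¹*g2) s⁻¹ * ω t⁻¹ g2 s⁻¹) *
        ((ω t t⁻¹ (s⁻¹*g1) : ℂ))) := by ring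
end Coc

/-- For a normalized 3-cocycle `ω`, the map `#` is an anti-multiplicative involution
of the tube algebra. -/
theorem stmt_11 {G : Type*} [Group G] [DecidableEq G] (ω : G → G → G → Circle)
    (hω : ∀ g1 g2 g3 g4 : G,
      ω g1 g2 g3 * ω g1 (g2 * g3) g4 * ω g2 g3 g4 =
        ω (g1 * g2) g3 g4 * ω g1 g2 (g3 * g4))
    (hnorm : ∀ g1 g2 g3 : G, (g1 = 1 ∨ g2 = 1 ∨ g3 = 1) → ω g1 g2 g3 = 1) :
    (∀ x y : TubeBasis G →₀ ℂ,
        tubeHash ω (tubeMul ω x y) = tubeMul ω (tubeHash ω y) (tubeHash ω x)) ∧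
    (∀ x : TubeBasis G →₀ ℂ, tubeHash ω (tubeHash ω x) = x) := by
  constructor
  · intro x y
    induction x using Finsupp.induction_linear with
    | zero => rw [tubeMul_zero_left, tubeHash_zero, tubeMul_zero_right]
    | add f g hf hg =>
        rw [tubeMul_add_left, tubeHash_add, hf, hg, tubeHash_add, tubeMul_add_right]
    | single p a =>
      induction y using Finsupp.induction_linear with
      | zero => rw [tubeMul_zero_right, tubeHash_zero, tubeMul_zero_left]
      | add f g hf hg =>
          rw [tubeMul_add_right, tubeHash_add, hf, hg, tubeHash_add, tubeMul_add_left]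
      | single q b =>
        rw [tubeMul_single_single, tubeHash_single, tubeHash_single,
          tubeMul_single_single]
        obtain ⟨⟨g2', t, g3⟩, hp⟩ := p
        obtain ⟨⟨g1, s, g2⟩, hq⟩ := q
        by_cases h : g2 = g2'
        · subst h
          simp only [TubeBasis.flip]
          unfold tubeMulBasis
          rw [dif_pos rfl, dif_pos rfl]
          erw [Finsupp.smul_single', Finsupp.smul_single', tubeHash_single]
          simp only [TubeBasis.flip]
          erw [Finsupp.single_eq_single_iff]
          left
          constructor
          · exact Subtype.ext (by simp [mul_inv_rev])
          · have key := cocB ω hω hnorm g1 g2 g3 s t hq hp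
            simp only [map_mul]
            rw [← Circle.coe_inv_eq_conj]
            push_cast
            field_simp
            linear_combination ((starRingEnd ℂ) a * (starRingEnd ℂ) b) * key
        · rw [show tubeMulBasis ω ⟨(g2', t, g3), hp⟩ ⟨(g1, s, g2), hq⟩ = 0 from
            dif_neg h]
          rw [show tubeMulBasis ω (TubeBasis.flip ⟨(g1, s, g2), hq⟩)
              (TubeBasis.flip ⟨(g2', t, g3), hp⟩) = 0 from
            dif_neg (fun hh => h (by simpa [TubeBasis.flip] using hh.symm))]
          rw [smul_zero, smul_zero, tubeHash_zero]
  · intro x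
    induction x using Finsupp.induction_linear with
    | zero => rw [tubeHash_zero, tubeHash_zero]
    | add f g hf hg => rw [tubeHash_add, tubeHash_add, hf, hg]
    | single p a =>
      rw [tubeHash_single, tubeHash_single, TubeBasis.flip_flip]
      obtain ⟨⟨g1, s, g2⟩, hp⟩ := p
      refine congrArg _ ?_
      have key := cocA ω hω hnorm g1 g2 s hp
      simp only [TubeBasis.flip, inv_inv, map_mul, Complex.conj_conj]
      rw [← Circle.coe_inv_eq_conj]
      push_cast
      field_simp
      linear_combination a * key.symm
end
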